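/- arXiv:math/0401139 — 4 statements merged into one kernel-verified Lean document; each statement's English description precedes it below -/
import Mathlib

section
/- The 2-cocycle μ_α on ℤ² given by μ_α((k,l),(k',l')) = exp(πiθ(kl'−k'l)) is a coboundary (i.e., of the form λ(x)λ(y)conj(λ(x+y)) for some λ : ℤ² → 𝕋) if and only if exp(2πiθ) = 1. -/
open Complex

/-- The 2-cocycle `μ_α` on `ℤ²` associated with `α = exp(2πiθ)`:
`μ_α((k,l),(k',l')) = exp(πiθ(kl' - k'l))`. -/
noncomputable def muAlpha (θ : ℝ) (x y : ℤ × ℤ) : ℂ :=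
  Complex.exp (Real.pi * I * θ * ((x.1 * y.2 - x.2 * y.1 : ℤ) : ℂ))

/-- `μ_α` is a coboundary, i.e. of the form `λ(x)λ(y) conj(λ(x+y))` for some
`𝕋`-valued `λ` on `ℤ²`, if and only if `exp(2πiθ) = 1`. -/
theorem muAlpha_coboundary_iff (θ : ℝ) :
    (∃ lam : ℤ × ℤ → ℂ, (∀ x, ‖lam x‖ = 1) ∧
      ∀ x y : ℤ × ℤ, muAlpha θ x y = lam x * lam y * (starRingEnd ℂ) (lam (x + y))) ↔
    Complex.exp (2 * Real.pi * I * θ) = 1 := by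
  constructor
  · rintro ⟨lam, -, hcob⟩
    have hsymm : muAlpha θ ((1:ℤ),(0:ℤ)) ((0:ℤ),(1:ℤ)) =
        muAlpha θ ((0:ℤ),(1:ℤ)) ((1:ℤ),(0:ℤ)) := by
      rw [hcob, hcob]
      ring_nf
    have h1 : Complex.exp (Real.pi * I * θ) = Complex.exp (-(Real.pi * I * θ)) := by
      have := hsymm
      unfold muAlpha at this
      norm_num at this
      convert this using 2 <;> ring_nf
    calc Complex.exp (2 * Real.pi * I * θ)
        = Complex.exp (Real.pi * I * θ) * Complex.exp (Real.pi * I * θ) := by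
          rw [← Complex.exp_add]; ring_nf
      _ = Complex.exp (-(Real.pi * I * θ)) * Complex.exp (Real.pi * I * θ) := by rw [h1]
      _ = 1 := by rw [← Complex.exp_add]; ring_nf; exact Complex.exp_zero
  · intro h
    obtain ⟨n, hn⟩ := Complex.exp_eq_one_iff.mp h
    have hθ : (θ : ℂ) = (n : ℂ) := by
      have h2 : (2 * Real.pi * I : ℂ) ≠ 0 := by
        simp [Real.pi_ne_zero, Complex.I_ne_zero, Complex.ofReal_ne_zero]
      have h3 : (2 * Real.pi * I : ℂ) * θ = (2 * Real.pi * I) * n := by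
        rw [mul_comm] at hn ⊢; linear_combination hn
      exact mul_left_cancel₀ h2 h3
    refine ⟨fun x => Complex.exp (Real.pi * I * θ * ((x.1 * x.2 : ℤ) : ℂ)), ?_, ?_⟩
    · intro x
      rw [Complex.norm_exp]
      norm_num [Complex.mul_re, Complex.mul_im]
    · intro x y
      rw [← Complex.exp_conj, ← Complex.exp_add, ← Complex.exp_add]
      unfold muAlpha
      rw [Complex.exp_eq_exp_iff_exists_int]
      refine ⟨n * x.1 * y.2, ?_⟩
      simp only [map_mul, Complex.conj_I, Complex.conj_ofReal, map_intCast,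
        Prod.fst_add, Prod.snd_add]
      push_cast
      rw [hθ]
      ring
end

section
/- The map α ↦ [μ_α] from 𝕋 to H²(ℤ², 𝕋) is injective: if α, α' ∈ 𝕋 and μ_α · conj(μ_{α'}) is a coboundary, then α = α'. -/
open Complex

/-- The map `α ↦ [μ_α]` from `𝕋` to `H²(ℤ², 𝕋)` is injective: if
`μ_α · conj(μ_{α'})` is a coboundary then `α = α'` (where `α = exp(2πiθ)`,
`α' = exp(2πiθ')`). -/
theorem muAlpha_injective (θ θ' : ℝ)
    (h : ∃ lam : ℤ × ℤ → ℂ, (∀ x, ‖lam x‖ = 1) ∧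
      ∀ x y : ℤ × ℤ, muAlpha θ x y * (starRingEnd ℂ) (muAlpha θ' x y) =
        lam x * lam y * (starRingEnd ℂ) (lam (x + y))) :
    Complex.exp (2 * Real.pi * I * θ) = Complex.exp (2 * Real.pi * I * θ') := by
  obtain ⟨lam, -, hcob⟩ := h
  have h1 := hcob (1, 0) (0, 1)
  have h2 := hcob (0, 1) (1, 0)
  have hsym : muAlpha θ (1,0) (0,1) * (starRingEnd ℂ) (muAlpha θ' (1,0) (0,1)) =
      muAlpha θ (0,1) (1,0) * (starRingEnd ℂ) (muAlpha θ' (0,1) (1,0)) := by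
    rw [h1, h2]
    have : ((1:ℤ),(0:ℤ)) + (0,1) = ((0:ℤ),(1:ℤ)) + (1,0) := by decide
    rw [this]; ring
  have hconj : ∀ t : ℝ, (starRingEnd ℂ) (Complex.exp (Real.pi * I * t)) =
      Complex.exp (-(Real.pi * I * t)) := by
    intro t
    rw [← Complex.exp_conj]
    congr 1
    simp [Complex.ext_iff]
  simp only [muAlpha] at hsym
  norm_num at hsym
  rw [hconj θ'] at hsym
  have hc2 : (starRingEnd ℂ) (Complex.exp (-(Real.pi * I * θ'))) =
      Complex.exp (Real.pi * I * θ') := by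
    rw [← Complex.exp_conj]; congr 1; simp [Complex.ext_iff]
  rw [hc2] at hsym
  have key : Complex.exp (Real.pi * I * θ - Real.pi * I * θ') =
      Complex.exp (-(Real.pi * I * θ - Real.pi * I * θ')) := by
    rw [neg_sub, sub_eq_add_neg, Complex.exp_add, sub_eq_add_neg, Complex.exp_add]
    linear_combination hsym
  set c := (Real.pi : ℂ) * I * θ - Real.pi * I * θ' with hc
  have : Complex.exp (2 * Real.pi * I * θ) =
      Complex.exp (2 * Real.pi * I * θ') * (Complex.exp c * Complex.exp (-c)) := by
    rw [← key, ← Complex.exp_add, ← Complex.exp_add]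
    congr 1; rw [hc]; ring
  rw [this, Complex.exp_neg, mul_inv_cancel₀ (Complex.exp_ne_zero _), mul_one]
end

section
/- Let Γ be a group acting on groups H and H' such that both pairs (H ⋊ Γ, H) and (H' ⋊ Γ, H') have the relative property (T). Then the pair ((H × H') ⋊ Γ, H × H') has the relative property (T), where Γ acts diagonally on H × H'. -/
open scoped InnerProductSpace

namespace RelTAux

variable {G : Type*} [Group G] {E : Type*} [NormedAddCommGroup E] [InnerProductSpace ℂ E]

variable (π : G →* (E ≃ₗᵢ[ℂ] E))

lemma pi_inv_apply (g : G) (v : E) : π g⁻¹ (π g v) = v := by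
  have h : π g⁻¹ * π g = 1 := by rw [← map_mul, inv_mul_cancel, map_one]
  have := DFunLike.congr_fun h v
  simpa using this

/-- The subspace of vectors fixed by all of `N`. -/
def fixedSubmodule (N : Subgroup G) : Submodule ℂ E where
  carrier := {v | ∀ n ∈ N, π n v = v}
  add_mem' := by intro a b ha hb n hn; simp [map_add, ha n hn, hb n hn]
  zero_mem' := by intro n hn; simp
  smul_mem' := by intro c a ha n hn; simp [map_smul, ha n hn]

lemma mem_fixedSubmodule {N : Subgroup G} {v : E} :
    v ∈ fixedSubmodule π N ↔ ∀ n ∈ N, π n v = v := Iff.rfl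

lemma isClosed_fixedSubmodule (N : Subgroup G) :
    IsClosed ((fixedSubmodule π N : Submodule ℂ E) : Set E) := by
  have : ((fixedSubmodule π N : Submodule ℂ E) : Set E)
      = ⋂ (n : N), {v : E | π n v = v} := by
    ext v
    simp [mem_fixedSubmodule]
  rw [this]
  exact isClosed_iInter fun n => isClosed_eq (π (n : G)).continuous continuous_id

lemma fixed_mapsTo {N : Subgroup G} (hN : ∀ g : G, ∀ n ∈ N, g⁻¹ * n * g ∈ N)
    (g : G) : ∀ v ∈ fixedSubmodule π N, π g v ∈ fixedSubmodule π N := by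
  intro v hv n hn
  have h1 : n * g = g * (g⁻¹ * n * g) := by group
  have h2 : π (g⁻¹ * n * g) v = v := hv _ (hN g n hn)
  calc π n (π g v) = π (n * g) v := by rw [map_mul]; rfl
    _ = π g (π (g⁻¹ * n * g) v) := by rw [h1, map_mul]; rfl
    _ = π g v := by rw [h2]

lemma orthogonal_mapsTo {K : Submodule ℂ E}
    (hK : ∀ g : G, ∀ v ∈ K, π g v ∈ K) (g : G) :
    ∀ v ∈ Kᗮ, π g v ∈ Kᗮ := by
  intro v hv
  intro w hw
  have h1 : ⟪w, π g v⟫_ℂ = ⟪π g⁻¹ w, v⟫_ℂ := by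
    conv_rhs => rw [← (π g).inner_map_map]
    rw [show π g (π g⁻¹ w) = w by simpa using pi_inv_apply π g⁻¹ w]
  rw [h1]
  exact hv _ (hK g⁻¹ w hw)

/-- Restriction of `π g` to an invariant subspace. -/
def restrictE (K : Submodule ℂ E) (hK : ∀ g : G, ∀ v ∈ K, π g v ∈ K) (g : G) :
    K ≃ₗᵢ[ℂ] K :=
  { toLinearEquiv :=
    { toFun := fun v => ⟨π g v, hK g v v.2⟩
      map_add' := fun a b => Subtype.ext (by simp)
      map_smul' := fun c a => Subtype.ext (by simp)
      invFun := fun v => ⟨π g⁻¹ v, hK g⁻¹ v v.2⟩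
      left_inv := fun v => Subtype.ext (by simp [pi_inv_apply π g v])
      right_inv := fun v => Subtype.ext (by simpa using pi_inv_apply π g⁻¹ (v : E)) }
    norm_map' := fun v => (π g).norm_map (v : E) }

@[simp] lemma restrictE_apply (K : Submodule ℂ E) (hK : ∀ g : G, ∀ v ∈ K, π g v ∈ K)
    (g : G) (v : K) : ((restrictE π K hK g v : K) : E) = π g (v : E) := rfl

/-- Restriction of a unitary representation to an invariant subspace. -/
def restrictHom (K : Submodule ℂ E) (hK : ∀ g : G, ∀ v ∈ K, π g v ∈ K) :
    G →* (K ≃ₗᵢ[ℂ] K) where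
  toFun := restrictE π K hK
  map_one' := by
    ext v
    simp [restrictE]
  map_mul' g₁ g₂ := by
    ext v
    simp only [restrictE_apply]
    show ((restrictE π K hK (g₁ * g₂) v : K) : E) = π g₁ (π g₂ (v : E))
    rw [restrictE_apply, map_mul]
    rfl

@[simp] lemma restrictHom_apply (K : Submodule ℂ E) (hK : ∀ g : G, ∀ v ∈ K, π g v ∈ K)
    (g : G) (v : K) : ((restrictHom π K hK g v : K) : E) = π g (v : E) := rfl


lemma norm_le_of_orthogonal {K : Submodule ℂ E} {a b : E} (ha : a ∈ K) (hb : b ∈ Kᗮ) :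
    ‖a‖ ≤ ‖a + b‖ ∧ ‖b‖ ≤ ‖a + b‖ := by
  have h0 : ⟪a, b⟫_ℂ = 0 := Submodule.inner_right_of_mem_orthogonal ha hb
  have h : ‖a + b‖ * ‖a + b‖ = ‖a‖ * ‖a‖ + ‖b‖ * ‖b‖ :=
    norm_add_sq_eq_norm_sq_add_norm_sq_of_inner_eq_zero a b h0
  constructor
  · nlinarith [norm_nonneg a, norm_nonneg b, norm_nonneg (a + b), sq_nonneg ‖b‖]
  · nlinarith [norm_nonneg a, norm_nonneg b, norm_nonneg (a + b), sq_nonneg ‖a‖]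

variable [CompleteSpace E]

lemma proj_diff_le {K : Submodule ℂ E} [CompleteSpace K]
    (hKinv : ∀ g : G, ∀ v ∈ K, π g v ∈ K) (g : G) (ξ : E) :
    ‖π g (Submodule.orthogonalProjectionOnto K ξ : E) - (Submodule.orthogonalProjectionOnto K ξ : E)‖ ≤ ‖π g ξ - ξ‖ := by
  set ξ₀ : E := (Submodule.orthogonalProjectionOnto K ξ : E) with hξ₀
  have hm0 : ξ₀ ∈ K := (Submodule.orthogonalProjectionOnto K ξ).2
  have hm1 : ξ - ξ₀ ∈ Kᗮ := Submodule.sub_starProjection_mem_orthogonal (K := K) ξ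
  have hKo := orthogonal_mapsTo π hKinv
  have hdecomp : π g ξ - ξ = (π g ξ₀ - ξ₀) + (π g (ξ - ξ₀) - (ξ - ξ₀)) := by
    simp only [map_sub]
    abel
  have haK : π g ξ₀ - ξ₀ ∈ K := K.sub_mem (hKinv g ξ₀ hm0) hm0
  have hbK : π g (ξ - ξ₀) - (ξ - ξ₀) ∈ Kᗮ := Kᗮ.sub_mem (hKo g _ hm1) hm1
  rw [hdecomp]
  exact (norm_le_of_orthogonal haK hbK).1

/-- The key quantitative consequence of relative property (T): an
`(F, δ')`-almost invariant unit vector is `δ'/δ`-close to its projection onto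
the subspace of `N`-fixed vectors. -/
lemma quantitative {N : Subgroup G} {F : Finset G} {δ : ℝ} (hδ : 0 < δ)
    (hT : ∀ (X : Type) (_ : NormedAddCommGroup X) (_ : InnerProductSpace ℂ X)
      (_ : CompleteSpace X) (ρ : G →* (X ≃ₗᵢ[ℂ] X)),
      (∃ ξ : X, ‖ξ‖ = 1 ∧ ∀ g ∈ F, ‖ρ g ξ - ξ‖ < δ) →
      ∃ ξ₀ : X, ξ₀ ≠ 0 ∧ ∀ h ∈ N, ρ h ξ₀ = ξ₀)
    (hN : ∀ g : G, ∀ n ∈ N, g⁻¹ * n * g ∈ N)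
    {E : Type} [NormedAddCommGroup E] [InnerProductSpace ℂ E] [CompleteSpace E]
    (π : G →* (E ≃ₗᵢ[ℂ] E)) {ξ : E} (hξ : ‖ξ‖ = 1)
    {δ' : ℝ} (hδ' : 0 < δ') (ha : ∀ g ∈ F, ‖π g ξ - ξ‖ < δ') :
    haveI : CompleteSpace (fixedSubmodule π N) :=
      (isClosed_fixedSubmodule π N).completeSpace_coe
    ‖ξ - (Submodule.orthogonalProjectionOnto (fixedSubmodule π N) ξ : E)‖ ≤ δ' / δ := by
  set K := fixedSubmodule π N with hK
  haveI : CompleteSpace K := (isClosed_fixedSubmodule π N).completeSpace_coe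
  set ξ₀ : E := (Submodule.orthogonalProjectionOnto K ξ : E) with hξ₀
  set ξ₁ : E := ξ - ξ₀ with hξ₁
  have hm0 : ξ₀ ∈ K := (Submodule.orthogonalProjectionOnto K ξ).2
  have hm1 : ξ₁ ∈ Kᗮ := Submodule.sub_starProjection_mem_orthogonal (K := K) ξ
  by_cases h0 : ξ₁ = 0
  · rw [h0, norm_zero]
    positivity
  · -- restrict to Kᗮ and use relative (T) there
    have hKinv : ∀ g : G, ∀ v ∈ K, π g v ∈ K := fixed_mapsTo π hN
    have hKo : ∀ g : G, ∀ v ∈ Kᗮ, π g v ∈ Kᗮ := orthogonal_mapsTo π hKinv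
    haveI : CompleteSpace (Kᗮ : Submodule ℂ E) :=
      (Submodule.isClosed_orthogonal K).completeSpace_coe
    set ρ := restrictHom π Kᗮ hKo with hρ
    have hnofix : ¬ ∃ ζ : (Kᗮ : Submodule ℂ E), ζ ≠ 0 ∧ ∀ h ∈ N, ρ h ζ = ζ := by
      rintro ⟨ζ, hζ0, hζ⟩
      apply hζ0
      have hζK : (ζ : E) ∈ K := by
        intro n hn
        have h2 := congrArg (Subtype.val) (hζ n hn)
        rw [hρ] at h2
        rwa [restrictHom_apply] at h2
      have : (ζ : E) = 0 := by
        have := (Submodule.orthogonal_disjoint K).le_bot ⟨hζK, ζ.2⟩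
        simpa using this
      exact Subtype.ext this
    have hnoalmost := mt (hT _ _ _ inferInstance ρ) hnofix
    push_neg at hnoalmost
    have hn1 : ‖ξ₁‖ ≠ 0 := norm_ne_zero_iff.2 h0
    have hn1' : (0:ℝ) < ‖ξ₁‖ := norm_pos_iff.2 h0
    set η : (Kᗮ : Submodule ℂ E) := ((‖ξ₁‖ : ℂ))⁻¹ • ⟨ξ₁, hm1⟩ with hη
    have hηnorm : ‖η‖ = 1 := by
      have : ‖η‖ = ‖((‖ξ₁‖ : ℂ))⁻¹‖ * ‖ξ₁‖ := by
        rw [hη, norm_smul]; rfl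
      rw [this]
      simp [hn1]
    obtain ⟨g, hgF, hge⟩ := hnoalmost η hηnorm
    have hcomm : (ρ g η : E) - (η : E) = ((‖ξ₁‖ : ℂ))⁻¹ • (π g ξ₁ - ξ₁) := by
      have h1 : (η : E) = ((‖ξ₁‖ : ℂ))⁻¹ • ξ₁ := rfl
      have h2 : ((ρ g η : (Kᗮ : Submodule ℂ E)) : E) = π g (((‖ξ₁‖ : ℂ))⁻¹ • ξ₁) := by
        rw [hρ, restrictHom_apply, h1]
      rw [h1, h2, map_smul]
      module
    have hnormdiff : ‖ρ g η - η‖ = ‖ξ₁‖⁻¹ * ‖π g ξ₁ - ξ₁‖ := by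
      have : ‖ρ g η - η‖ = ‖(ρ g η : E) - (η : E)‖ := rfl
      rw [this, hcomm, norm_smul]
      simp
    have hlow : δ * ‖ξ₁‖ ≤ ‖π g ξ₁ - ξ₁‖ := by
      have := hge
      rw [hnormdiff] at this
      calc δ * ‖ξ₁‖ ≤ (‖ξ₁‖⁻¹ * ‖π g ξ₁ - ξ₁‖) * ‖ξ₁‖ := by nlinarith
        _ = ‖π g ξ₁ - ξ₁‖ := by field_simp
    -- Pythagoras: ‖π g ξ₁ - ξ₁‖ ≤ ‖π g ξ - ξ‖
    have hdecomp : π g ξ - ξ = (π g ξ₀ - ξ₀) + (π g ξ₁ - ξ₁) := by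
      rw [hξ₁]
      simp only [map_sub]
      abel
    have haK : π g ξ₀ - ξ₀ ∈ K := K.sub_mem (hKinv g ξ₀ hm0) hm0
    have hbK : π g ξ₁ - ξ₁ ∈ Kᗮ := Kᗮ.sub_mem (hKo g ξ₁ hm1) hm1
    have hle : ‖π g ξ₁ - ξ₁‖ ≤ ‖π g ξ - ξ‖ := by
      rw [hdecomp]
      exact (norm_le_of_orthogonal haK hbK).2
    have hfin : δ * ‖ξ₁‖ < δ' := lt_of_le_of_lt (hlow.trans hle) (ha g hgF)
    rw [le_div_iff₀ hδ]
    nlinarith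

lemma proj_congr {K K' : Submodule ℂ E} [CompleteSpace K] [CompleteSpace K']
    (h : K = K') (ξ : E) :
    ((Submodule.orthogonalProjectionOnto K ξ : E)) = ((Submodule.orthogonalProjectionOnto K' ξ : E)) := by
  subst h
  rfl

section Main

open SemidirectProduct

variable {Γ H H' : Type*} [Group Γ] [Group H] [Group H']
  (φ : Γ →* MulAut H) (φ' : Γ →* MulAut H') (φd : Γ →* MulAut (H × H'))

/-- The embedding `H ⋊ Γ → (H × H') ⋊ Γ`. -/
def emb1 (hφd : ∀ (g : Γ) (x : H) (y : H'), φd g (x, y) = (φ g x, φ' g y)) :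
    H ⋊[φ] Γ →* (H × H') ⋊[φd] Γ :=
  SemidirectProduct.map (MonoidHom.inl H H') (MonoidHom.id Γ)
    (fun γ => by
      refine MonoidHom.ext fun x => ?_
      show ((φ γ) x, (1 : H')) = φd γ (x, 1)
      rw [hφd γ x 1, map_one])

/-- The embedding `H' ⋊ Γ → (H × H') ⋊ Γ`. -/
def emb2 (hφd : ∀ (g : Γ) (x : H) (y : H'), φd g (x, y) = (φ g x, φ' g y)) :
    H' ⋊[φ'] Γ →* (H × H') ⋊[φd] Γ :=
  SemidirectProduct.map (MonoidHom.inr H H') (MonoidHom.id Γ)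
    (fun γ => by
      refine MonoidHom.ext fun y => ?_
      show ((1 : H), (φ' γ) y) = φd γ (1, y)
      rw [hφd γ 1 y, map_one])

/-- The projection `(H × H') ⋊ Γ → H' ⋊ Γ`. -/
def proj2 (hφd : ∀ (g : Γ) (x : H) (y : H'), φd g (x, y) = (φ g x, φ' g y)) :
    (H × H') ⋊[φd] Γ →* H' ⋊[φ'] Γ :=
  SemidirectProduct.map (MonoidHom.snd H H') (MonoidHom.id Γ)
    (fun γ => by
      refine MonoidHom.ext fun p => ?_
      obtain ⟨x, y⟩ := p
      show (φd γ (x, y)).2 = φ' γ y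
      rw [hφd γ x y])

/-- The projection `(H × H') ⋊ Γ → H ⋊ Γ`. -/
def proj1 (hφd : ∀ (g : Γ) (x : H) (y : H'), φd g (x, y) = (φ g x, φ' g y)) :
    (H × H') ⋊[φd] Γ →* H ⋊[φ] Γ :=
  SemidirectProduct.map (MonoidHom.fst H H') (MonoidHom.id Γ)
    (fun γ => by
      refine MonoidHom.ext fun p => ?_
      obtain ⟨x, y⟩ := p
      show (φd γ (x, y)).1 = φ γ x
      rw [hφd γ x y])

variable (hφd : ∀ (g : Γ) (x : H) (y : H'), φd g (x, y) = (φ g x, φ' g y))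

lemma mem_ker_proj2_iff (m : (H × H') ⋊[φd] Γ) :
    m ∈ (proj2 φ φ' φd hφd).ker ↔ ∃ x : H, emb1 φ φ' φd hφd (inl x) = m := by
  constructor
  · intro hm
    rw [MonoidHom.mem_ker] at hm
    have h1 : m.left.2 = 1 := congrArg SemidirectProduct.left hm
    have h2 : m.right = 1 := congrArg SemidirectProduct.right hm
    refine ⟨m.left.1, ?_⟩
    rw [emb1, SemidirectProduct.map_inl]
    refine SemidirectProduct.ext ?_ ?_
    · show ((m.left.1, (1 : H')) : H × H') = m.left
      exact Prod.ext rfl h1.symm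
    · exact h2.symm
  · rintro ⟨x, rfl⟩
    rw [MonoidHom.mem_ker, emb1, SemidirectProduct.map_inl]
    rw [proj2, SemidirectProduct.map_inl]
    show SemidirectProduct.inl ((1 : H'):) = 1
    rw [map_one]

lemma mem_ker_proj1_iff (m : (H × H') ⋊[φd] Γ) :
    m ∈ (proj1 φ φ' φd hφd).ker ↔ ∃ y : H', emb2 φ φ' φd hφd (inl y) = m := by
  constructor
  · intro hm
    rw [MonoidHom.mem_ker] at hm
    have h1 : m.left.1 = 1 := congrArg SemidirectProduct.left hm
    have h2 : m.right = 1 := congrArg SemidirectProduct.right hm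
    refine ⟨m.left.2, ?_⟩
    rw [emb2, SemidirectProduct.map_inl]
    refine SemidirectProduct.ext ?_ ?_
    · show (((1 : H), m.left.2) : H × H') = m.left
      exact Prod.ext h1.symm rfl
    · exact h2.symm
  · rintro ⟨y, rfl⟩
    rw [MonoidHom.mem_ker, emb2, SemidirectProduct.map_inl]
    rw [proj1, SemidirectProduct.map_inl]
    show SemidirectProduct.inl ((1 : H):) = 1
    rw [map_one]

end Main

end RelTAux

/-- A pair `(G, N)` with `N` a subgroup of `G` has the *relative property (T)*
if there exist a finite set `F ⊆ G` and `δ > 0` such that every unitary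
representation of `G` on a complex Hilbert space possessing an `(F,δ)`-almost
invariant unit vector has a nonzero `N`-invariant vector. -/
def RelPropertyT (G : Type*) [Group G] (N : Subgroup G) : Prop :=
  ∃ (F : Finset G) (δ : ℝ), 0 < δ ∧
    ∀ (H : Type) (_ : NormedAddCommGroup H) (_ : InnerProductSpace ℂ H)
      (_ : CompleteSpace H) (π : G →* (H ≃ₗᵢ[ℂ] H)),
      (∃ ξ : H, ‖ξ‖ = 1 ∧ ∀ g ∈ F, ‖π g ξ - ξ‖ < δ) →
      ∃ ξ₀ : H, ξ₀ ≠ 0 ∧ ∀ h ∈ N, π h ξ₀ = ξ₀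

/-- If `(H ⋊ Γ, H)` and `(H' ⋊ Γ, H')` have relative property (T), then so does
`((H × H') ⋊ Γ, H × H')` for the diagonal action of `Γ` on `H × H'`. -/
theorem relT_prod (Γ H H' : Type*) [Group Γ] [Group H] [Group H']
    (φ : Γ →* MulAut H) (φ' : Γ →* MulAut H')
    (φd : Γ →* MulAut (H × H'))
    (hφd : ∀ (g : Γ) (x : H) (y : H'), φd g (x, y) = (φ g x, φ' g y))
    (h1 : RelPropertyT (H ⋊[φ] Γ) (SemidirectProduct.inl (φ := φ)).range)
    (h2 : RelPropertyT (H' ⋊[φ'] Γ) (SemidirectProduct.inl (φ := φ')).range) :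
    RelPropertyT ((H × H') ⋊[φd] Γ) (SemidirectProduct.inl (φ := φd)).range := by
  classical
  obtain ⟨F₁, δ₁, hδ₁, hT₁⟩ := h1
  obtain ⟨F₂, δ₂, hδ₂, hT₂⟩ := h2
  set i₁ := RelTAux.emb1 φ φ' φd hφd with hi₁
  set i₂ := RelTAux.emb2 φ φ' φd hφd with hi₂
  set q₁ := RelTAux.proj2 φ φ' φd hφd with hq₁
  set d : ℝ := min δ₁ δ₂ / 4 with hd
  have hmin1 : min δ₁ δ₂ ≤ δ₁ := min_le_left _ _
  have hmin2 : min δ₁ δ₂ ≤ δ₂ := min_le_right _ _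
  have hmin0 : 0 < min δ₁ δ₂ := lt_min hδ₁ hδ₂
  have hd0 : 0 < d := by rw [hd]; linarith
  refine ⟨F₁.image i₁ ∪ F₂.image i₂, d, hd0, ?_⟩
  intro E _inst1 _inst2 _inst3 π hexists
  obtain ⟨ξ, hξ, hFξ⟩ := hexists
  -- the subgroup `H × 1` of the big group, as a kernel (hence normal)
  set N₁ : Subgroup ((H × H') ⋊[φd] Γ) := q₁.ker with hN₁
  have hN₁conj : ∀ g : (H × H') ⋊[φd] Γ, ∀ n ∈ N₁, g⁻¹ * n * g ∈ N₁ := by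
    intro g n hn
    have h := (MonoidHom.normal_ker q₁).conj_mem n hn g⁻¹
    rwa [inv_inv] at h
  -- the two fixed submodules coincide
  have hKeq : RelTAux.fixedSubmodule (π.comp i₁) (SemidirectProduct.inl (φ := φ)).range
      = RelTAux.fixedSubmodule π N₁ := by
    ext v
    simp only [RelTAux.mem_fixedSubmodule]
    constructor
    · intro hv m hm
      obtain ⟨x, rfl⟩ := (RelTAux.mem_ker_proj2_iff φ φ' φd hφd m).1 hm
      exact hv _ ⟨x, rfl⟩
    · intro hv n hn
      obtain ⟨x, rfl⟩ := hn
      exact hv _ ((RelTAux.mem_ker_proj2_iff φ φ' φd hφd _).2 ⟨x, rfl⟩)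
  set K₁ := RelTAux.fixedSubmodule π N₁ with hK₁
  haveI hKc' : CompleteSpace
      (RelTAux.fixedSubmodule (π.comp i₁) (SemidirectProduct.inl (φ := φ)).range) :=
    (RelTAux.isClosed_fixedSubmodule (π.comp i₁) _).completeSpace_coe
  haveI hKc : CompleteSpace K₁ :=
    (RelTAux.isClosed_fixedSubmodule π N₁).completeSpace_coe
  have hK₁inv : ∀ g : (H × H') ⋊[φd] Γ, ∀ v ∈ K₁, π g v ∈ K₁ :=
    RelTAux.fixed_mapsTo π hN₁conj
  -- normality of inl.range inside H ⋊ Γ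
  have hNsmall : ∀ g : H ⋊[φ] Γ, ∀ n ∈ (SemidirectProduct.inl (φ := φ)).range,
      g⁻¹ * n * g ∈ (SemidirectProduct.inl (φ := φ)).range := by
    intro g n hn
    rw [SemidirectProduct.range_inl_eq_ker_rightHom] at hn ⊢
    have := (MonoidHom.normal_ker (SemidirectProduct.rightHom
      (φ := φ))).conj_mem n hn g⁻¹
    simpa using this
  -- quantitative estimate for the first pair
  have hq : ∀ g ∈ F₁, ‖(π.comp i₁) g ξ - ξ‖ < d := fun g hg =>
    hFξ _ (Finset.mem_union_left _ (Finset.mem_image_of_mem _ hg))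
  have h1q' := RelTAux.quantitative hδ₁ hT₁ hNsmall (π.comp i₁) hξ hd0 hq
  set p : K₁ := Submodule.orthogonalProjectionOnto K₁ ξ with hp
  set ξ₀ : E := (p : E) with hξ₀def
  have hpc : ((Submodule.orthogonalProjectionOnto
      (RelTAux.fixedSubmodule (π.comp i₁) (SemidirectProduct.inl (φ := φ)).range) ξ : E)) = ξ₀ :=
    RelTAux.proj_congr hKeq ξ
  have h1q : ‖ξ - ξ₀‖ ≤ d / δ₁ := by rw [← hpc]; exact h1q'
  have hdd1 : d / δ₁ ≤ 1/4 := by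
    rw [div_le_iff₀ hδ₁]
    rw [hd]
    linarith
  have hξ₀norm : 3/4 ≤ ‖ξ₀‖ := by
    have h := norm_sub_norm_le ξ ξ₀
    rw [hξ] at h
    linarith
  have hξ₀0 : ξ₀ ≠ 0 := by
    intro h
    rw [h, norm_zero] at hξ₀norm
    linarith
  -- step B: ξ₀ is almost invariant for the second factor
  have hstepB : ∀ g ∈ F₂, ‖π (i₂ g) ξ₀ - ξ₀‖ < d := by
    intro g hg
    exact lt_of_le_of_lt (RelTAux.proj_diff_le π hK₁inv (i₂ g) ξ)
      (hFξ _ (Finset.mem_union_right _ (Finset.mem_image_of_mem _ hg)))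
  -- restrict the representation to K₁ and pull back to H' ⋊ Γ
  set ρ : (H' ⋊[φ'] Γ) →* (K₁ ≃ₗᵢ[ℂ] K₁) :=
    (RelTAux.restrictHom π K₁ hK₁inv).comp i₂ with hρ
  set η : K₁ := ((‖ξ₀‖ : ℂ))⁻¹ • p with hη
  have hηcoe : (η : E) = ((‖ξ₀‖ : ℂ))⁻¹ • ξ₀ := rfl
  have hnormξ₀ : ‖((‖ξ₀‖ : ℂ))⁻¹‖ = ‖ξ₀‖⁻¹ := by
    rw [norm_inv, Complex.norm_real, norm_norm]
  have hηnorm : ‖η‖ = 1 := by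
    have : ‖η‖ = ‖(η : E)‖ := rfl
    rw [this, hηcoe, norm_smul, hnormξ₀]
    field_simp
  have halmost : ∀ g ∈ F₂, ‖ρ g η - η‖ < δ₂ := by
    intro g hg
    have hnn : (0:ℝ) ≤ ‖π (i₂ g) ξ₀ - ξ₀‖ := norm_nonneg _
    have hnorm : ‖ρ g η - η‖ = ‖ξ₀‖⁻¹ * ‖π (i₂ g) ξ₀ - ξ₀‖ := by
      have e2 : ((ρ g η : K₁) : E) = π (i₂ g) (((‖ξ₀‖ : ℂ))⁻¹ • ξ₀) := by
        rw [hρ]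
        rfl
      have h2 : ((ρ g η : K₁) : E) - (η : E) = ((‖ξ₀‖ : ℂ))⁻¹ • (π (i₂ g) ξ₀ - ξ₀) := by
        rw [hηcoe, e2, map_smul]
        module
      have : ‖ρ g η - η‖ = ‖((ρ g η : K₁) : E) - (η : E)‖ := rfl
      rw [this, h2, norm_smul, hnormξ₀]
    rw [hnorm]
    have hinv : ‖ξ₀‖⁻¹ ≤ 4/3 := by
      rw [inv_le_comm₀ (by linarith) (by norm_num)]
      linarith
    have hd2 : d ≤ δ₂ / 4 := by rw [hd]; linarith
    calc ‖ξ₀‖⁻¹ * ‖π (i₂ g) ξ₀ - ξ₀‖ ≤ (4/3) * ‖π (i₂ g) ξ₀ - ξ₀‖ :=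
          mul_le_mul_of_nonneg_right hinv hnn
      _ < (4/3) * d := by
          have := hstepB g hg
          linarith
      _ ≤ δ₂ / 3 := by linarith
      _ < δ₂ := by linarith
  obtain ⟨ζ, hζ0, hζfix⟩ := hT₂ K₁ inferInstance inferInstance inferInstance ρ ⟨η, hηnorm, halmost⟩
  refine ⟨(ζ : E), ?_, ?_⟩
  · intro h
    exact hζ0 (Subtype.ext h)
  · intro n hn
    obtain ⟨⟨x, y⟩, rfl⟩ := hn
    have hx : π (i₁ (SemidirectProduct.inl x)) (ζ : E) = (ζ : E) := by
      have hmem : (ζ : E) ∈ RelTAux.fixedSubmodule π N₁ := ζ.2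
      exact hmem _ ((RelTAux.mem_ker_proj2_iff φ φ' φd hφd _).2 ⟨x, rfl⟩)
    have hy : π (i₂ (SemidirectProduct.inl y)) (ζ : E) = (ζ : E) := by
      have h0 := hζfix (SemidirectProduct.inl y) ⟨y, rfl⟩
      have h2 := congrArg Subtype.val h0
      exact h2
    have hsplit : SemidirectProduct.inl (φ := φd) (x, y)
        = i₁ (SemidirectProduct.inl x) * i₂ (SemidirectProduct.inl y) := by
      rw [hi₁, hi₂, RelTAux.emb1, RelTAux.emb2, SemidirectProduct.map_inl,
        SemidirectProduct.map_inl, ← map_mul]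
      congr 1
      show (x, y) = ((x, 1) : H × H') * (1, y)
      rw [Prod.mk_mul_mk, mul_one, one_mul]
    rw [hsplit, map_mul]
    show π (i₁ (SemidirectProduct.inl x)) (π (i₂ (SemidirectProduct.inl y)) (ζ : E)) = (ζ : E)
    rw [hy, hx]
end

section
/- Let σ : Γ → Aut(H) be an action such that (H ⋊_σ Γ, H) has relative property (T), and let β ∈ Aut(Γ). Then, with σ' = σ ∘ β and σ̃ the diagonal action σ̃(g) = σ(g) × σ'(g) on H × H, the pair ((H × H) ⋊_{σ̃} Γ, H × H) has relative property (T). -/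
section AuxRep

variable {V : Type} [NormedAddCommGroup V] [InnerProductSpace ℂ V]
variable {G : Type*} [Group G]

lemma pi_symm_apply (π : G →* (V ≃ₗᵢ[ℂ] V)) (g : G) (x : V) :
    (π g).symm x = π g⁻¹ x := by
  rw [map_inv]; rfl

/-- Restriction of a linear isometric equivalence to an invariant submodule. -/
noncomputable def resAux (K : Submodule ℂ V) (e : V ≃ₗᵢ[ℂ] V)
    (he : ∀ x ∈ K, e x ∈ K) (he' : ∀ x ∈ K, e.symm x ∈ K) : K ≃ₗᵢ[ℂ] K where
  toLinearEquiv :=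
  { toFun := fun x => ⟨e x, he x x.2⟩
    map_add' := fun x y => by ext; simp
    map_smul' := fun c x => by ext; simp
    invFun := fun x => ⟨e.symm x, he' x x.2⟩
    left_inv := fun x => by ext; simp
    right_inv := fun x => by ext; simp }
  norm_map' := fun x => e.norm_map x

@[simp] lemma resAux_apply (K : Submodule ℂ V) (e : V ≃ₗᵢ[ℂ] V)
    (he : ∀ x ∈ K, e x ∈ K) (he' : ∀ x ∈ K, e.symm x ∈ K) (x : K) :
    (resAux K e he he' x : V) = e x := rfl

/-- Restriction of a unitary representation to an invariant submodule. -/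
noncomputable def resRep (π : G →* (V ≃ₗᵢ[ℂ] V)) (K : Submodule ℂ V)
    (hK : ∀ g, ∀ x ∈ K, π g x ∈ K) : G →* (K ≃ₗᵢ[ℂ] K) where
  toFun g := resAux K (π g) (hK g)
    (fun x hx => by rw [pi_symm_apply]; exact hK g⁻¹ x hx)
  map_one' := by
    apply LinearIsometryEquiv.ext; intro x; apply Subtype.ext; simp
  map_mul' g₁ g₂ := by
    apply LinearIsometryEquiv.ext; intro x; apply Subtype.ext
    simp [map_mul, LinearIsometryEquiv.coe_mul]

@[simp] lemma resRep_apply (π : G →* (V ≃ₗᵢ[ℂ] V)) (K : Submodule ℂ V)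
    (hK : ∀ g, ∀ x ∈ K, π g x ∈ K) (g : G) (x : K) :
    (resRep π K hK g x : V) = π g x := rfl

/-- The orthogonal complement of an invariant submodule is invariant. -/
lemma orth_invariant (π : G →* (V ≃ₗᵢ[ℂ] V)) (K : Submodule ℂ V)
    (hK : ∀ g, ∀ x ∈ K, π g x ∈ K) :
    ∀ g, ∀ x ∈ Kᗮ, π g x ∈ Kᗮ := by
  intro g x hx
  rw [Submodule.mem_orthogonal]
  intro u hu
  have h1 : u = π g ((π g).symm u) := ((π g).apply_symm_apply u).symm
  rw [h1, LinearIsometryEquiv.inner_map_map]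
  exact hx _ (by rw [pi_symm_apply]; exact hK g⁻¹ u hu)

lemma proj_norm_le (K : Submodule ℂ V) [K.HasOrthogonalProjection] (w : V) :
    ‖(K.orthogonalProjectionOnto w : V)‖ ≤ ‖w‖ := by
  have h1 := (K.orthogonalProjectionOnto).le_opNorm w
  have h2 := Submodule.orthogonalProjectionOnto_norm_le K
  calc ‖(K.orthogonalProjectionOnto w : V)‖ = ‖K.orthogonalProjectionOnto w‖ := rfl
    _ ≤ ‖K.orthogonalProjectionOnto‖ * ‖w‖ := h1
    _ ≤ 1 * ‖w‖ := mul_le_mul_of_nonneg_right h2 (norm_nonneg w)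
    _ = ‖w‖ := one_mul _

lemma sub_proj_norm_le [CompleteSpace V] (K : Submodule ℂ V) [K.HasOrthogonalProjection] (w : V) :
    ‖w - (K.orthogonalProjectionOnto w : V)‖ ≤ ‖w‖ := by
  have h := Submodule.starProjection_add_starProjection_orthogonal (K := K) w
  have h' : w - (K.orthogonalProjectionOnto w : V) = (Kᗮ.orthogonalProjectionOnto w : V) := by
    rw [sub_eq_iff_eq_add']; exact h.symm
  rw [h']
  exact proj_norm_le Kᗮ w

end AuxRep

/-- If `(H ⋊_σ Γ, H)` has relative property (T) and `β ∈ Aut(Γ)`, then for the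
diagonal action `σ̃(g) = σ(g) × σ(β(g))` of `Γ` on `H × H`, the pair
`((H × H) ⋊_{σ̃} Γ, H × H)` has relative property (T). -/
theorem relT_diag_twist (Γ H : Type*) [Group Γ] [Group H]
    (σ : Γ →* MulAut H) (β : Γ ≃* Γ)
    (σt : Γ →* MulAut (H × H))
    (hσt : ∀ (g : Γ) (x y : H), σt g (x, y) = (σ g x, σ (β g) y))
    (h : RelPropertyT (H ⋊[σ] Γ) (SemidirectProduct.inl (φ := σ)).range) :
    RelPropertyT ((H × H) ⋊[σt] Γ) (SemidirectProduct.inl (φ := σt)).range := by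
  classical
  obtain ⟨F₀, δ₀, hδ₀, hT⟩ := h
  -- the two embeddings of H ⋊[σ] Γ into (H × H) ⋊[σt] Γ
  have compat₁ : ∀ g : Γ,
      ((SemidirectProduct.inl (φ := σt)).comp (MonoidHom.inl H H)).comp (σ g).toMonoidHom
        = (MulAut.conj ((SemidirectProduct.inr : Γ →* (H × H) ⋊[σt] Γ) g)).toMonoidHom.comp
          ((SemidirectProduct.inl (φ := σt)).comp (MonoidHom.inl H H)) := by
    intro g
    refine MonoidHom.ext fun x => ?_
    simp only [MonoidHom.comp_apply, MulEquiv.coe_toMonoidHom, MonoidHom.inl_apply,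
      MulAut.conj_apply]
    rw [← map_inv, ← SemidirectProduct.inl_aut, hσt]
    simp
  have compat₂ : ∀ g : Γ,
      ((SemidirectProduct.inl (φ := σt)).comp (MonoidHom.inr H H)).comp (σ g).toMonoidHom
        = (MulAut.conj (((SemidirectProduct.inr : Γ →* (H × H) ⋊[σt] Γ).comp
            β.symm.toMonoidHom) g)).toMonoidHom.comp
          ((SemidirectProduct.inl (φ := σt)).comp (MonoidHom.inr H H)) := by
    intro g
    refine MonoidHom.ext fun x => ?_
    simp only [MonoidHom.comp_apply, MulEquiv.coe_toMonoidHom, MonoidHom.inr_apply,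
      MulAut.conj_apply]
    rw [← map_inv, ← SemidirectProduct.inl_aut, hσt]
    simp
  set f₁ : H ⋊[σ] Γ →* (H × H) ⋊[σt] Γ :=
    SemidirectProduct.lift ((SemidirectProduct.inl (φ := σt)).comp (MonoidHom.inl H H))
      SemidirectProduct.inr compat₁ with hf₁def
  set f₂ : H ⋊[σ] Γ →* (H × H) ⋊[σt] Γ :=
    SemidirectProduct.lift ((SemidirectProduct.inl (φ := σt)).comp (MonoidHom.inr H H))
      ((SemidirectProduct.inr : Γ →* (H × H) ⋊[σt] Γ).comp β.symm.toMonoidHom) compat₂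
      with hf₂def
  have hf₁inl : ∀ x : H, f₁ (SemidirectProduct.inl x)
      = SemidirectProduct.inl (φ := σt) (x, 1) := by
    intro x; simp [hf₁def]
  have hf₂inl : ∀ x : H, f₂ (SemidirectProduct.inl x)
      = SemidirectProduct.inl (φ := σt) (1, x) := by
    intro x; simp [hf₂def]
  refine ⟨F₀.image f₁ ∪ F₀.image f₂, δ₀ / 2, half_pos hδ₀, ?_⟩
  rintro V iV1 iV2 iV3 π ⟨ξ, hξ1, hξF⟩
  have hb₁ : ∀ s ∈ F₀, ‖π (f₁ s) ξ - ξ‖ < δ₀ / 2 := fun s hs =>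
    hξF _ (Finset.mem_union_left _ (Finset.mem_image_of_mem f₁ hs))
  have hb₂ : ∀ s ∈ F₀, ‖π (f₂ s) ξ - ξ‖ < δ₀ / 2 := fun s hs =>
    hξF _ (Finset.mem_union_right _ (Finset.mem_image_of_mem f₂ hs))
  -- the subspace of vectors fixed by H × 1
  set K : Submodule ℂ V :=
    { carrier := {v | ∀ x : H, π (f₁ (SemidirectProduct.inl x)) v = v}
      add_mem' := fun {a b} ha hb x => by simp [map_add, ha x, hb x]
      zero_mem' := fun x => by simp
      smul_mem' := fun c a ha x => by simp [map_smul, ha x] } with hKdef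
  have hKmem : ∀ v : V, v ∈ K ↔ ∀ x : H, π (f₁ (SemidirectProduct.inl x)) v = v :=
    fun v => Iff.rfl
  have hKcl : IsClosed (K : Set V) := by
    have hKs : (K : Set V) = ⋂ x : H, {v | π (f₁ (SemidirectProduct.inl x)) v = v} := by
      ext v; simp only [Set.mem_iInter, SetLike.mem_coe, hKmem]; rfl
    rw [hKs]
    exact isClosed_iInter fun x => isClosed_eq ((π _).continuous) continuous_id
  haveI : CompleteSpace K := hKcl.completeSpace_coe
  haveI : CompleteSpace (Kᗮ : Submodule ℂ V) := (Submodule.isClosed_orthogonal K).completeSpace_coe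
  -- K is invariant under the whole group, since H × 1 is normal
  have hconj : ∀ (g : (H × H) ⋊[σt] Γ) (x : H), ∃ y : H,
      f₁ (SemidirectProduct.inl y) = g⁻¹ * f₁ (SemidirectProduct.inl x) * g := by
    rintro ⟨⟨a, b⟩, γ⟩ x
    refine ⟨σ γ⁻¹ (a⁻¹ * x * a), ?_⟩
    rw [hf₁inl, hf₁inl, SemidirectProduct.mk_eq_inl_mul_inr]
    have hpair : ((a⁻¹ * x * a, (1 : H)) : H × H) = (a, b)⁻¹ * (x, 1) * (a, b) := by
      simp [Prod.ext_iff]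
    calc SemidirectProduct.inl (φ := σt) (σ γ⁻¹ (a⁻¹ * x * a), 1)
        = SemidirectProduct.inl (φ := σt) (σt γ⁻¹ ((a, b)⁻¹ * (x, 1) * (a, b))) := by
          rw [← hpair, hσt, map_one]
      _ = SemidirectProduct.inr γ⁻¹ * SemidirectProduct.inl ((a, b)⁻¹ * (x, 1) * (a, b))
            * SemidirectProduct.inr γ := by
          rw [map_inv σt, SemidirectProduct.inl_aut_inv]
      _ = (SemidirectProduct.inl (φ := σt) (a, b) * SemidirectProduct.inr γ)⁻¹
            * SemidirectProduct.inl (x, 1)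
            * (SemidirectProduct.inl (φ := σt) (a, b) * SemidirectProduct.inr γ) := by
          rw [mul_inv_rev, ← map_inv, ← map_inv, map_mul, map_mul]
          group
  have hKinv : ∀ g, ∀ v ∈ K, π g v ∈ K := by
    intro g v hv
    rw [hKmem]
    intro x
    obtain ⟨y, hy⟩ := hconj g x
    have hcomm : f₁ (SemidirectProduct.inl x) * g = g * f₁ (SemidirectProduct.inl y) := by
      rw [hy]; group
    have e1 : π (f₁ (SemidirectProduct.inl x)) (π g v)
        = π (f₁ (SemidirectProduct.inl x) * g) v := by rw [map_mul]; rfl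
    rw [e1, hcomm, map_mul]
    show π g (π (f₁ (SemidirectProduct.inl y)) v) = π g v
    rw [(hKmem v).1 hv y]
  -- the orthogonal projection onto K commutes with the representation
  set P : V → V := fun v => (K.orthogonalProjectionOnto v : V) with hPdef
  have hPcomm : ∀ (g : (H × H) ⋊[σt] Γ) (v : V), P (π g v) = π g (P v) := by
    intro g v
    apply Submodule.eq_starProjection_of_mem_orthogonal
    · exact hKinv g _ (K.orthogonalProjectionOnto v).2
    · have hs : π g v - π g (P v) = π g (v - P v) := by rw [map_sub]
      rw [hs]
      exact orth_invariant π K hKinv g _ (Submodule.sub_starProjection_mem_orthogonal v)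
  have hPsub : ∀ a b : V, P a - P b = P (a - b) := by
    intro a b
    simp only [hPdef, ← Submodule.coe_sub, map_sub]
  have hPmemK : ∀ v : V, P v ∈ K := fun v => (K.orthogonalProjectionOnto v).2
  -- step 1: the component of ξ orthogonal to K is small
  set ξo : V := ξ - P ξ with hξodef
  have hξoKo : ξo ∈ Kᗮ := Submodule.sub_starProjection_mem_orthogonal ξ
  have hstep1 : ‖ξo‖ < 1 / 2 := by
    by_contra hge
    push_neg at hge
    have hξo0 : (0 : ℝ) < ‖ξo‖ := lt_of_lt_of_le (by norm_num) hge
    set πo : H ⋊[σ] Γ →* ((Kᗮ : Submodule ℂ V) ≃ₗᵢ[ℂ] (Kᗮ : Submodule ℂ V)) :=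
      (resRep π Kᗮ (orth_invariant π K hKinv)).comp f₁ with hπodef
    have hexists : ∃ η : (Kᗮ : Submodule ℂ V), ‖η‖ = 1 ∧ ∀ s ∈ F₀, ‖πo s η - η‖ < δ₀ := by
      refine ⟨((‖ξo‖⁻¹ : ℝ) : ℂ) • ⟨ξo, hξoKo⟩, ?_, ?_⟩
      · have : ‖(⟨ξo, hξoKo⟩ : (Kᗮ : Submodule ℂ V))‖ = ‖ξo‖ := rfl
        rw [norm_smul, this, Complex.norm_real, Real.norm_eq_abs, abs_of_nonneg (inv_nonneg.2 (norm_nonneg _)),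
          inv_mul_cancel₀ (ne_of_gt hξo0)]
      · intro s hs
        have key : (πo s (⟨ξo, hξoKo⟩ : (Kᗮ : Submodule ℂ V))
            - (⟨ξo, hξoKo⟩ : (Kᗮ : Submodule ℂ V)) : V) = π (f₁ s) ξo - ξo := rfl
        have hval : ‖πo s (⟨ξo, hξoKo⟩ : (Kᗮ : Submodule ℂ V))
            - (⟨ξo, hξoKo⟩ : (Kᗮ : Submodule ℂ V))‖ = ‖π (f₁ s) ξo - ξo‖ := by
          rw [← key]; rfl
        have hcalc : π (f₁ s) ξo - ξo
            = (π (f₁ s) ξ - ξ) - P (π (f₁ s) ξ - ξ) := by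
          rw [← hPsub]
          simp only [hξodef, map_sub, hPcomm]
          abel
        have hbound : ‖π (f₁ s) ξo - ξo‖ < δ₀ / 2 := by
          rw [hcalc]
          exact lt_of_le_of_lt (sub_proj_norm_le K _) (hb₁ s hs)
        have hsmul : πo s (((‖ξo‖⁻¹ : ℝ) : ℂ) • (⟨ξo, hξoKo⟩ : (Kᗮ : Submodule ℂ V)))
            - ((‖ξo‖⁻¹ : ℝ) : ℂ) • (⟨ξo, hξoKo⟩ : (Kᗮ : Submodule ℂ V))
            = ((‖ξo‖⁻¹ : ℝ) : ℂ) • (πo s (⟨ξo, hξoKo⟩ : (Kᗮ : Submodule ℂ V))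
              - (⟨ξo, hξoKo⟩ : (Kᗮ : Submodule ℂ V))) := by
          rw [map_smul, smul_sub]
        rw [hsmul, norm_smul, Complex.norm_real, Real.norm_eq_abs,
          abs_of_nonneg (inv_nonneg.2 (norm_nonneg _)), hval]
        have h2 : ‖ξo‖⁻¹ ≤ 2 := by
          rw [inv_le_comm₀ hξo0 (by norm_num : (0:ℝ) < 2)]
          linarith
        calc ‖ξo‖⁻¹ * ‖π (f₁ s) ξo - ξo‖ < ‖ξo‖⁻¹ * (δ₀ / 2) := by
              exact mul_lt_mul_of_pos_left hbound (inv_pos.2 hξo0)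
          _ ≤ 2 * (δ₀ / 2) := by
              exact mul_le_mul_of_nonneg_right h2 (by linarith)
          _ = δ₀ := by ring
    obtain ⟨ζ, hζ0, hζfix⟩ := hT ↥Kᗮ inferInstance inferInstance inferInstance πo hexists
    have hζK : (ζ : V) ∈ K := by
      rw [hKmem]
      intro x
      have hmem : (SemidirectProduct.inl x : H ⋊[σ] Γ) ∈
          (SemidirectProduct.inl (φ := σ)).range := ⟨x, rfl⟩
      have := hζfix (SemidirectProduct.inl x) hmem
      exact congrArg Subtype.val this
    have : (ζ : V) = 0 := by
      have h0 := (Submodule.mem_orthogonal K (ζ : V)).1 ζ.2 (ζ : V) hζK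
      exact inner_self_eq_zero.1 h0
    exact hζ0 (Subtype.ext this)
  -- consequently the projection of ξ onto K is large
  have hPξ : (1 : ℝ) / 2 < ‖P ξ‖ := by
    have htr : ‖ξ‖ ≤ ‖P ξ‖ + ‖ξo‖ := by
      have : ξ = P ξ + ξo := by simp [hξodef]
      calc ‖ξ‖ = ‖P ξ + ξo‖ := by rw [← this]
        _ ≤ ‖P ξ‖ + ‖ξo‖ := norm_add_le _ _
    rw [hξ1] at htr
    linarith
  have hPξ0 : (0 : ℝ) < ‖P ξ‖ := lt_trans (by norm_num) hPξ
  -- step 2: apply relative (T) to the restriction to K, twisted by β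
  set πK : H ⋊[σ] Γ →* ((K : Submodule ℂ V) ≃ₗᵢ[ℂ] (K : Submodule ℂ V)) :=
    (resRep π K hKinv).comp f₂ with hπKdef
  have hexists2 : ∃ η : (K : Submodule ℂ V), ‖η‖ = 1 ∧ ∀ s ∈ F₀, ‖πK s η - η‖ < δ₀ := by
    refine ⟨((‖P ξ‖⁻¹ : ℝ) : ℂ) • ⟨P ξ, hPmemK ξ⟩, ?_, ?_⟩
    · have : ‖(⟨P ξ, hPmemK ξ⟩ : (K : Submodule ℂ V))‖ = ‖P ξ‖ := rfl
      rw [norm_smul, this, Complex.norm_real, Real.norm_eq_abs, abs_of_nonneg (inv_nonneg.2 (norm_nonneg _)),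
        inv_mul_cancel₀ (ne_of_gt hPξ0)]
    · intro s hs
      have key : (πK s (⟨P ξ, hPmemK ξ⟩ : (K : Submodule ℂ V))
          - (⟨P ξ, hPmemK ξ⟩ : (K : Submodule ℂ V)) : V) = π (f₂ s) (P ξ) - P ξ := rfl
      have hval : ‖πK s (⟨P ξ, hPmemK ξ⟩ : (K : Submodule ℂ V))
          - (⟨P ξ, hPmemK ξ⟩ : (K : Submodule ℂ V))‖ = ‖π (f₂ s) (P ξ) - P ξ‖ := by
        rw [← key]; rfl
      have hcalc : π (f₂ s) (P ξ) - P ξ = P (π (f₂ s) ξ - ξ) := by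
        rw [← hPsub, hPcomm]
      have hbound : ‖π (f₂ s) (P ξ) - P ξ‖ < δ₀ / 2 := by
        rw [hcalc]
        exact lt_of_le_of_lt (proj_norm_le K _) (hb₂ s hs)
      have hsmul : πK s (((‖P ξ‖⁻¹ : ℝ) : ℂ) • (⟨P ξ, hPmemK ξ⟩ : (K : Submodule ℂ V)))
          - ((‖P ξ‖⁻¹ : ℝ) : ℂ) • (⟨P ξ, hPmemK ξ⟩ : (K : Submodule ℂ V))
          = ((‖P ξ‖⁻¹ : ℝ) : ℂ) • (πK s (⟨P ξ, hPmemK ξ⟩ : (K : Submodule ℂ V))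
            - (⟨P ξ, hPmemK ξ⟩ : (K : Submodule ℂ V))) := by
        rw [map_smul, smul_sub]
      rw [hsmul, norm_smul, Complex.norm_real, Real.norm_eq_abs,
        abs_of_nonneg (inv_nonneg.2 (norm_nonneg _)), hval]
      have h2 : ‖P ξ‖⁻¹ < 2 := by
        rw [inv_lt_comm₀ hPξ0 (by norm_num : (0:ℝ) < 2)]
        linarith
      calc ‖P ξ‖⁻¹ * ‖π (f₂ s) (P ξ) - P ξ‖ ≤ ‖P ξ‖⁻¹ * (δ₀ / 2) :=
            mul_le_mul_of_nonneg_left (le_of_lt hbound) (inv_nonneg.2 (norm_nonneg _))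
        _ < 2 * (δ₀ / 2) := by
            exact mul_lt_mul_of_pos_right h2 (by linarith)
        _ = δ₀ := by ring
  obtain ⟨ζ, hζ0, hζfix⟩ := hT ↥K inferInstance inferInstance inferInstance πK hexists2
  refine ⟨(ζ : V), fun hc => hζ0 (Subtype.ext hc), ?_⟩
  rintro g ⟨n, rfl⟩
  have hx : π (f₁ (SemidirectProduct.inl n.1)) (ζ : V) = (ζ : V) := (hKmem _).1 ζ.2 n.1
  have hy : π (f₂ (SemidirectProduct.inl n.2)) (ζ : V) = (ζ : V) := by
    have hmem : (SemidirectProduct.inl n.2 : H ⋊[σ] Γ) ∈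
        (SemidirectProduct.inl (φ := σ)).range := ⟨n.2, rfl⟩
    exact congrArg Subtype.val (hζfix (SemidirectProduct.inl n.2) hmem)
  have hsplit : (SemidirectProduct.inl n : (H × H) ⋊[σt] Γ)
      = f₁ (SemidirectProduct.inl n.1) * f₂ (SemidirectProduct.inl n.2) := by
    rw [hf₁inl, hf₂inl, ← map_mul]
    congr 1
    simp [Prod.ext_iff]
  rw [hsplit, map_mul]
  show π (f₁ (SemidirectProduct.inl n.1)) (π (f₂ (SemidirectProduct.inl n.2)) (ζ : V)) = (ζ : V)
  rw [hy, hx]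
end
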